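/- The ensemble constrained-search functional F(ρ) = inf{ Tr(Γ H₀) : Γ a density matrix on Λ^N ℂ^M with density ρ } (extended by +∞ outside P_{M,N}) is convex on ℝ^M, and it equals the convex hull of the pure-state constrained-search functional F̃(ρ) = inf{ ⟨Ψ, H₀Ψ⟩ : Ψ normalized with density ρ }. -/

import Mathlib

open scoped BigOperators ComplexOrder

abbrev FIdx (M N : ℕ) := {I : Finset (Fin M) // I.card = N}

/-- Density of a fermionic state. -/
def density (M N : ℕ) (Ψ : FIdx M N → ℂ) (i : Fin M) : ℝ :=
  ∑ I : FIdx M N, if i ∈ I.1 then Complex.normSq (Ψ I) else 0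

/-- The diagonal potential operator on `Λ^N ℂ^M` induced by `v ∈ ℝ^M`:
`V e_I = (Σ_{i∈I} v_i) e_I`. -/
def Vmat (M N : ℕ) (v : Fin M → ℝ) : Matrix (FIdx M N) (FIdx M N) ℂ :=
  Matrix.diagonal fun I => ((∑ i ∈ I.1, v i : ℝ) : ℂ)

/-- The (real) quadratic form `⟨Ψ, HΨ⟩`. -/
noncomputable def quadForm (M N : ℕ) (H : Matrix (FIdx M N) (FIdx M N) ℂ) (Ψ : FIdx M N → ℂ) : ℝ :=
  (dotProduct (star Ψ) (H.mulVec Ψ)).re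

/-- A ground state: a normalized minimizer of the quadratic form over the unit sphere. -/
def IsGroundState (M N : ℕ) (H : Matrix (FIdx M N) (FIdx M N) ℂ) (Ψ : FIdx M N → ℂ) : Prop :=
  (∑ I : FIdx M N, Complex.normSq (Ψ I) = 1) ∧
  ∀ Φ : FIdx M N → ℂ, (∑ I : FIdx M N, Complex.normSq (Φ I) = 1) →
    quadForm M N H Ψ ≤ quadForm M N H Φ

/-- Density of an ensemble state (density matrix) `Γ`: `ρ_i = Tr(Γ â_i†â_i)`. -/
noncomputable def edensity (M N : ℕ) (Γ : Matrix (FIdx M N) (FIdx M N) ℂ) (i : Fin M) : ℝ :=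
  ∑ I : FIdx M N, if i ∈ I.1 then (Γ I I).re else 0

/-- The pure-state (Levy) constrained-search functional `F̃`, `+∞` for non-representable
densities. -/
noncomputable def Ftilde (M N : ℕ) (H0 : Matrix (FIdx M N) (FIdx M N) ℂ)
    (ρ : Fin M → ℝ) : EReal :=
  sInf {x : EReal | ∃ Ψ : FIdx M N → ℂ,
    (∑ I : FIdx M N, Complex.normSq (Ψ I) = 1) ∧
    (∀ i, density M N Ψ i = ρ i) ∧ x = (quadForm M N H0 Ψ : ℝ)}

/-- The ensemble (Lieb) constrained-search functional `F`, `+∞` for non-representable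
densities. -/
noncomputable def Fens (M N : ℕ) (H0 : Matrix (FIdx M N) (FIdx M N) ℂ)
    (ρ : Fin M → ℝ) : EReal :=
  sInf {x : EReal | ∃ Γ : Matrix (FIdx M N) (FIdx M N) ℂ,
    Γ.PosSemidef ∧ Γ.trace = 1 ∧
    (∀ i, edensity M N Γ i = ρ i) ∧ x = (((Γ * H0).trace).re : ℝ)}

/-- Convexity of an extended-real-valued functional on densities. -/
def ConvexFn (M : ℕ) (g : (Fin M → ℝ) → EReal) : Prop :=
  ∀ (ρ σ : Fin M → ℝ) (a b : ℝ), 0 ≤ a → 0 ≤ b → a + b = 1 →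
    g (a • ρ + b • σ) ≤ (a : EReal) * g ρ + (b : EReal) * g σ

section aux
variable {M N : ℕ}

lemma spectral_decomp (H0 : Matrix (FIdx M N) (FIdx M N) ℂ)
    {Γ : Matrix (FIdx M N) (FIdx M N) ℂ} (hΓ : Γ.PosSemidef) (htr : Γ.trace = 1) :
    ∃ (w : FIdx M N → ℝ) (Ψ : FIdx M N → FIdx M N → ℂ),
      (∀ k, 0 ≤ w k) ∧ (∑ k, w k = 1) ∧
      (∀ k, ∑ I : FIdx M N, Complex.normSq (Ψ k I) = 1) ∧
      (∀ i, edensity M N Γ i = ∑ k, w k * density M N (Ψ k) i) ∧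
      ((Γ * H0).trace).re = ∑ k, w k * quadForm M N H0 (Ψ k) := by
  classical
  set hH := hΓ.1
  set U : Matrix (FIdx M N) (FIdx M N) ℂ := (Matrix.IsHermitian.eigenvectorUnitary hH : Matrix (FIdx M N) (FIdx M N) ℂ) with hU
  set w : FIdx M N → ℝ := hH.eigenvalues with hwdef
  have hUU : star U * U = 1 := by
    have := (Matrix.IsHermitian.eigenvectorUnitary hH).2
    exact Matrix.mem_unitaryGroup_iff'.mp this
  have hcol : ∀ k, ∑ I : FIdx M N, Complex.normSq (U I k) = 1 := by
    intro k
    have h1 : (star U * U) k k = 1 := by rw [hUU]; simp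
    rw [Matrix.mul_apply] at h1
    have : ∑ I : FIdx M N, ((Complex.normSq (U I k) : ℝ) : ℂ) = 1 := by
      rw [← h1]
      refine Finset.sum_congr rfl fun I _ => ?_
      rw [Matrix.star_apply, Complex.star_def, ← Complex.normSq_eq_conj_mul_self]
    have := congrArg Complex.re this
    simpa using this
  have hEntry : ∀ I J, Γ I J = ∑ k, U I k * (w k : ℂ) * (starRingEnd ℂ) (U J k) := by
    intro I J
    conv_lhs => rw [hH.spectral_theorem, Unitary.conjStarAlgAut_apply]
    rw [Matrix.mul_apply]
    refine Finset.sum_congr rfl fun k _ => ?_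
    rw [Matrix.mul_apply]
    simp only [Matrix.diagonal_apply, Function.comp_apply, mul_ite, mul_zero,
      Finset.sum_ite_eq, Finset.sum_ite_eq', Finset.mem_univ, if_true]
    rw [Matrix.star_apply]
    simp only [hU, Matrix.IsHermitian.eigenvectorUnitary_apply, Complex.star_def, hwdef]
    rfl
  have hconj : ∀ z : ℂ, z * (starRingEnd ℂ) z = ((Complex.normSq z : ℝ) : ℂ) := by
    intro z; rw [Complex.mul_conj]
  have hcolC : ∀ k, ∑ I : FIdx M N, U I k * (starRingEnd ℂ) (U I k) = 1 := by
    intro k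
    have h2 : ∑ I : FIdx M N, U I k * (starRingEnd ℂ) (U I k)
        = ((∑ I : FIdx M N, Complex.normSq (U I k) : ℝ) : ℂ) := by
      push_cast
      exact Finset.sum_congr rfl fun I _ => hconj _
    rw [h2, hcol k, Complex.ofReal_one]
  refine ⟨w, fun k I => U I k, fun k => hΓ.eigenvalues_nonneg k, ?_, hcol, ?_, ?_⟩
  · -- sum of weights
    have htrC : (1 : ℂ) = ((∑ k, w k : ℝ) : ℂ) := by
      rw [← htr, Matrix.trace]
      push_cast
      calc ∑ I, Γ.diag I = ∑ I, ∑ k, U I k * (w k : ℂ) * (starRingEnd ℂ) (U I k) :=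
            Finset.sum_congr rfl fun I _ => hEntry I I
        _ = ∑ k, ∑ I, U I k * (w k : ℂ) * (starRingEnd ℂ) (U I k) := Finset.sum_comm
        _ = ∑ k, (w k : ℂ) := by
            refine Finset.sum_congr rfl fun k _ => ?_
            calc ∑ I, U I k * (w k : ℂ) * (starRingEnd ℂ) (U I k)
                = (w k : ℂ) * ∑ I, U I k * (starRingEnd ℂ) (U I k) := by
                  rw [Finset.mul_sum]
                  exact Finset.sum_congr rfl fun I _ => by ring
              _ = (w k : ℂ) := by rw [hcolC k, mul_one]
    exact_mod_cast htrC.symm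
  · -- densities
    intro i
    rw [edensity]
    calc ∑ I : FIdx M N, (if i ∈ I.1 then (Γ I I).re else 0)
        = ∑ I : FIdx M N, ∑ k, (if i ∈ I.1 then w k * Complex.normSq (U I k) else 0) := by
          refine Finset.sum_congr rfl fun I _ => ?_
          by_cases h : i ∈ I.1
          · simp only [h, if_true]
            rw [hEntry I I, Complex.re_sum]
            refine Finset.sum_congr rfl fun k _ => ?_
            have h3 : U I k * (w k : ℂ) * (starRingEnd ℂ) (U I k)
                = ((w k * Complex.normSq (U I k) : ℝ) : ℂ) := by
              rw [mul_right_comm, hconj]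
              push_cast; ring
            rw [h3, Complex.ofReal_re]
          · simp [h]
      _ = ∑ k, ∑ I : FIdx M N, (if i ∈ I.1 then w k * Complex.normSq (U I k) else 0) :=
          Finset.sum_comm
      _ = ∑ k, w k * density M N (fun I => U I k) i := by
          refine Finset.sum_congr rfl fun k _ => ?_
          rw [density, Finset.mul_sum]
          exact Finset.sum_congr rfl fun I _ => by by_cases h : i ∈ I.1 <;> simp [h]
  · -- trace value
    have hC : (Γ * H0).trace
        = ∑ k, (w k : ℂ) * dotProduct (star fun I => U I k) (H0.mulVec fun I => U I k) := by
      rw [Matrix.trace]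
      simp only [Matrix.diag_apply, Matrix.mul_apply]
      calc ∑ I, ∑ J, Γ I J * H0 J I
          = ∑ I, ∑ J, ∑ k, U I k * (w k : ℂ) * (starRingEnd ℂ) (U J k) * H0 J I := by
            refine Finset.sum_congr rfl fun I _ => Finset.sum_congr rfl fun J _ => ?_
            rw [hEntry I J, Finset.sum_mul]
        _ = ∑ I, ∑ k, ∑ J, U I k * (w k : ℂ) * (starRingEnd ℂ) (U J k) * H0 J I :=
            Finset.sum_congr rfl fun I _ => Finset.sum_comm
        _ = ∑ k, ∑ I, ∑ J, U I k * (w k : ℂ) * (starRingEnd ℂ) (U J k) * H0 J I :=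
            Finset.sum_comm
        _ = ∑ k, ∑ J, ∑ I, U I k * (w k : ℂ) * (starRingEnd ℂ) (U J k) * H0 J I :=
            Finset.sum_congr rfl fun k _ => Finset.sum_comm
        _ = _ := by
            refine Finset.sum_congr rfl fun k _ => ?_
            rw [dotProduct, Finset.mul_sum]
            refine Finset.sum_congr rfl fun J _ => ?_
            simp only [Pi.star_apply, Complex.star_def, Matrix.mulVec, dotProduct,
              Finset.mul_sum]
            exact Finset.sum_congr rfl fun I _ => by ring
    rw [hC, Complex.re_sum]
    refine Finset.sum_congr rfl fun k _ => ?_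
    rw [quadForm, Complex.re_ofReal_mul]

lemma quadForm_ge (H : Matrix (FIdx M N) (FIdx M N) ℂ) (Ψ : FIdx M N → ℂ)
    (h1 : ∑ I : FIdx M N, Complex.normSq (Ψ I) = 1) :
    -(∑ I : FIdx M N, ∑ J : FIdx M N, ‖H I J‖) ≤ quadForm M N H Ψ := by
  have habs : ∀ I, ‖Ψ I‖ ≤ 1 := by
    intro I
    have h2 : Complex.normSq (Ψ I) ≤ 1 := by
      rw [← h1]
      exact Finset.single_le_sum (fun J _ => Complex.normSq_nonneg _) (Finset.mem_univ I)
    nlinarith [Complex.sq_norm (Ψ I), norm_nonneg (Ψ I)]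
  have hd : ‖dotProduct (star Ψ) (H.mulVec Ψ)‖
      ≤ ∑ I : FIdx M N, ∑ J : FIdx M N, ‖H I J‖ := by
    rw [dotProduct]
    refine le_trans (norm_sum_le _ _) ?_
    refine Finset.sum_le_sum fun J _ => ?_
    rw [Pi.star_apply, norm_mul]
    have h4 : ‖H.mulVec Ψ J‖ ≤ ∑ I, ‖H J I‖ := by
      rw [Matrix.mulVec, dotProduct]
      refine le_trans (norm_sum_le _ _) (Finset.sum_le_sum fun I _ => ?_)
      rw [norm_mul]
      calc ‖H J I‖ * ‖Ψ I‖
          ≤ ‖H J I‖ * 1 :=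
            mul_le_mul_of_nonneg_left (habs I) (norm_nonneg _)
        _ = ‖H J I‖ := mul_one _
    have h5 : ‖star (Ψ J)‖ ≤ 1 := by
      rw [Complex.star_def, Complex.norm_conj]; exact habs J
    calc ‖star (Ψ J)‖ * ‖H.mulVec Ψ J‖
        ≤ 1 * ∑ I, ‖H J I‖ := by
          refine mul_le_mul h5 h4 (norm_nonneg _) zero_le_one
      _ = ∑ I, ‖H J I‖ := one_mul _
  rw [quadForm]
  have h6 := Complex.abs_re_le_norm (dotProduct (star Ψ) (H.mulVec Ψ))
  have h7 := neg_abs_le (dotProduct (star Ψ) (H.mulVec Ψ)).re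
  linarith

lemma pure_to_mixed (H0 : Matrix (FIdx M N) (FIdx M N) ℂ) (Ψ : FIdx M N → ℂ)
    (h1 : ∑ I : FIdx M N, Complex.normSq (Ψ I) = 1) :
    ∃ Γ : Matrix (FIdx M N) (FIdx M N) ℂ, Γ.PosSemidef ∧ Γ.trace = 1 ∧
      (∀ i, edensity M N Γ i = density M N Ψ i) ∧
      ((Γ * H0).trace).re = quadForm M N H0 Ψ := by
  refine ⟨Matrix.vecMulVec Ψ (star Ψ), Matrix.PosSemidef.of_dotProduct_mulVec_nonneg ?_ ?_, ?_, ?_, ?_⟩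
  · ext I J
    simp only [Matrix.conjTranspose_apply, Matrix.vecMulVec_apply, Pi.star_apply, star_mul',
      star_star]
    ring
  · intro x
    set c : ℂ := ∑ J, star (Ψ J) * x J with hc
    have hdot : dotProduct (star x) ((Matrix.vecMulVec Ψ (star Ψ)).mulVec x)
        = star c * c := by
      rw [dotProduct]
      simp only [Matrix.mulVec, dotProduct, Matrix.vecMulVec_apply, Pi.star_apply]
      rw [hc, star_sum, Finset.sum_mul]
      refine Finset.sum_congr rfl fun I _ => ?_
      rw [Finset.mul_sum, Finset.mul_sum]
      refine Finset.sum_congr rfl fun J _ => ?_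
      simp only [star_mul', star_star]
      ring
    rw [hdot, Complex.star_def, Complex.conj_mul', ← Complex.ofReal_pow]
    exact_mod_cast sq_nonneg ‖c‖
  · have h2 : (Matrix.vecMulVec Ψ (star Ψ)).trace
        = ((∑ I : FIdx M N, Complex.normSq (Ψ I) : ℝ) : ℂ) := by
      rw [Matrix.trace]
      push_cast
      refine Finset.sum_congr rfl fun I _ => ?_
      simp only [Matrix.diag_apply, Matrix.vecMulVec_apply, Pi.star_apply]
      rw [Complex.star_def, Complex.mul_conj]
    rw [h2, h1, Complex.ofReal_one]
  · intro i
    rw [edensity, density]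
    refine Finset.sum_congr rfl fun I _ => ?_
    by_cases h : i ∈ I.1
    · simp only [h, if_true, Matrix.vecMulVec_apply, Pi.star_apply]
      rw [Complex.star_def, Complex.mul_conj, Complex.ofReal_re]
    · simp [h]
  · have h3 : (Matrix.vecMulVec Ψ (star Ψ) * H0).trace
        = dotProduct (star Ψ) (H0.mulVec Ψ) := by
      rw [Matrix.trace]
      simp only [Matrix.diag_apply, Matrix.mul_apply, Matrix.vecMulVec_apply, Pi.star_apply]
      rw [dotProduct]
      calc ∑ I, ∑ J, Ψ I * star (Ψ J) * H0 J I
          = ∑ J, ∑ I, Ψ I * star (Ψ J) * H0 J I := Finset.sum_comm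
        _ = _ := by
          refine Finset.sum_congr rfl fun J _ => ?_
          simp only [Pi.star_apply, Matrix.mulVec, dotProduct, Finset.mul_sum]
          exact Finset.sum_congr rfl fun I _ => by ring
    rw [quadForm, h3]

lemma ereal_le_coe_of_forall_eps {C : EReal} {r : ℝ}
    (h : ∀ ε : ℝ, 0 < ε → C ≤ ((r + ε : ℝ) : EReal)) : C ≤ (r : EReal) := by
  induction C using EReal.rec with
  | bot => exact bot_le
  | coe c =>
    rw [EReal.coe_le_coe_iff]
    refine le_of_forall_pos_le_add fun ε hε => ?_
    exact_mod_cast h ε hε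
  | top =>
    have h2 := h 1 one_pos
    rw [top_le_iff] at h2
    exact absurd h2 (EReal.coe_ne_top _)

lemma convexFn_sum {M : ℕ} {G : (Fin M → ℝ) → EReal}
    (hG : ConvexFn M G) {ι : Type*} [DecidableEq ι] (s : Finset ι)
    (ρ : ι → Fin M → ℝ) (c : ι → ℝ) :
    ∀ w : ι → ℝ, (∀ k ∈ s, 0 ≤ w k) → (∑ k ∈ s, w k) = 1 →
    (∀ k ∈ s, G (ρ k) ≤ ((c k : ℝ) : EReal)) →
    G (∑ k ∈ s, w k • ρ k) ≤ ((∑ k ∈ s, w k * c k : ℝ) : EReal) := by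
  induction s using Finset.induction_on with
  | empty => intro w _ hsum _; simp at hsum
  | @insert a t hat ih =>
    intro w hw hsum hc
    simp only [Finset.sum_insert hat] at hsum ⊢
    have hb0 : (0 : ℝ) ≤ ∑ k ∈ t, w k :=
      Finset.sum_nonneg fun k hk => hw k (Finset.mem_insert_of_mem hk)
    set b : ℝ := ∑ k ∈ t, w k with hb
    rcases hb0.eq_or_lt with hb1 | hb1
    · -- b = 0 : all the other weights vanish
      have hwa : w a = 1 := by linarith
      have hz : ∀ k ∈ t, w k = 0 := by
        intro k hk
        have h0 := (Finset.sum_eq_zero_iff_of_nonneg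
          (fun k hk => hw k (Finset.mem_insert_of_mem hk))).mp hb1.symm
        exact h0 k hk
      have harg : ∑ k ∈ t, w k • ρ k = 0 :=
        Finset.sum_eq_zero fun k hk => by rw [hz k hk, zero_smul]
      have hcs : ∑ k ∈ t, w k * c k = 0 :=
        Finset.sum_eq_zero fun k hk => by rw [hz k hk, zero_mul]
      rw [harg, hcs, hwa]
      simpa using hc a (Finset.mem_insert_self a t)
    · -- b > 0
      have hsum' : ∑ k ∈ t, w k / b = 1 := by
        rw [← Finset.sum_div, ← hb, div_self hb1.ne']
      have ih' := ih (fun k => w k / b)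
        (fun k hk => div_nonneg (hw k (Finset.mem_insert_of_mem hk)) hb0) hsum'
        (fun k hk => hc k (Finset.mem_insert_of_mem hk))
      have key := hG (ρ a) (∑ k ∈ t, (w k / b) • ρ k) (w a) b
        (hw a (Finset.mem_insert_self a t)) hb0 (by linarith)
      have harg : b • ∑ k ∈ t, (w k / b) • ρ k = ∑ k ∈ t, w k • ρ k := by
        rw [Finset.smul_sum]
        refine Finset.sum_congr rfl fun k hk => ?_
        rw [smul_smul]
        congr 1
        field_simp
      rw [harg] at key
      refine le_trans key ?_
      have e1 : (↑(w a) : EReal) * G (ρ a) ≤ ((w a * c a : ℝ) : EReal) := by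
        rw [EReal.coe_mul]
        exact mul_le_mul_of_nonneg_left (hc a (Finset.mem_insert_self a t))
          (by exact_mod_cast hw a (Finset.mem_insert_self a t))
      have e2 : (↑b : EReal) * G (∑ k ∈ t, (w k / b) • ρ k)
          ≤ ((b * ∑ k ∈ t, w k / b * c k : ℝ) : EReal) := by
        rw [EReal.coe_mul]
        exact mul_le_mul_of_nonneg_left ih' (by exact_mod_cast hb0)
      have e3 : b * ∑ k ∈ t, w k / b * c k = ∑ k ∈ t, w k * c k := by
        rw [Finset.mul_sum]
        refine Finset.sum_congr rfl fun k hk => ?_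
        field_simp
      calc (↑(w a) : EReal) * G (ρ a) + (↑b : EReal) * G (∑ k ∈ t, (w k / b) • ρ k)
          ≤ ((w a * c a : ℝ) : EReal) + ((b * ∑ k ∈ t, w k / b * c k : ℝ) : EReal) :=
            add_le_add e1 e2
        _ = _ := by rw [← EReal.coe_add, e3]

end aux

/-- The ensemble constrained-search functional `F` is convex, and it is the convex hull of
the pure-state constrained-search functional `F̃`: it is the largest convex function below
`F̃`. -/
theorem F_convex_hull (M N : ℕ) (hNM : N ≤ M)
    (H0 : Matrix (FIdx M N) (FIdx M N) ℂ) (hH0 : H0.IsHermitian) :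
    ConvexFn M (Fens M N H0) ∧
    (∀ ρ, Fens M N H0 ρ ≤ Ftilde M N H0 ρ) ∧
    (∀ G : (Fin M → ℝ) → EReal, ConvexFn M G →
      (∀ ρ, G ρ ≤ Ftilde M N H0 ρ) → ∀ ρ, G ρ ≤ Fens M N H0 ρ) := by
  classical
  set m0 : ℝ := -(∑ I : FIdx M N, ∑ J : FIdx M N, ‖H0 I J‖) with hm0
  have hlb : ∀ (Γ : Matrix (FIdx M N) (FIdx M N) ℂ), Γ.PosSemidef → Γ.trace = 1 →
      m0 ≤ ((Γ * H0).trace).re := by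
    intro Γ hΓ htr
    obtain ⟨w, Ψ, hw0, hw1, hnorm, _, hval⟩ := spectral_decomp H0 hΓ htr
    rw [hval]
    calc m0 = ∑ k : FIdx M N, w k * m0 := by rw [← Finset.sum_mul, hw1, one_mul]
      _ ≤ ∑ k, w k * quadForm M N H0 (Ψ k) :=
        Finset.sum_le_sum fun k _ =>
          mul_le_mul_of_nonneg_left (quadForm_ge H0 (Ψ k) (hnorm k)) (hw0 k)
  refine ⟨?_, ?_, ?_⟩
  · -- convexity of Fens
    intro ρ σ a b ha hb hab
    rcases ha.eq_or_lt with ha0 | ha0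
    · have hb1 : b = 1 := by linarith
      subst hb1
      rw [← ha0]
      simp
    rcases hb.eq_or_lt with hb0 | hb0
    · have ha1 : a = 1 := by linarith
      subst ha1
      rw [← hb0]
      simp
    have hcomb : ∀ (Γ1 Γ2 : Matrix (FIdx M N) (FIdx M N) ℂ),
        Γ1.PosSemidef → Γ1.trace = 1 → (∀ i, edensity M N Γ1 i = ρ i) →
        Γ2.PosSemidef → Γ2.trace = 1 → (∀ i, edensity M N Γ2 i = σ i) →
        Fens M N H0 (a • ρ + b • σ)
          ≤ ((a * ((Γ1 * H0).trace).re + b * ((Γ2 * H0).trace).re : ℝ) : EReal) := by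
      intro Γ1 Γ2 h11 h12 h13 h21 h22 h23
      have hsmul : ∀ (u : ℝ), 0 ≤ u → ∀ {A : Matrix (FIdx M N) (FIdx M N) ℂ},
          A.PosSemidef → ((u : ℂ) • A).PosSemidef := by
        intro u hu A hA
        refine Matrix.PosSemidef.of_dotProduct_mulVec_nonneg ?_ ?_
        · unfold Matrix.IsHermitian
          rw [Matrix.conjTranspose_smul, Complex.star_def, Complex.conj_ofReal, hA.1.eq]
        · intro x
          rw [Matrix.smul_mulVec, dotProduct_smul, smul_eq_mul]
          exact mul_nonneg (by exact_mod_cast hu) (hA.dotProduct_mulVec_nonneg x)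
      set Γ : Matrix (FIdx M N) (FIdx M N) ℂ := (a : ℂ) • Γ1 + (b : ℂ) • Γ2 with hΓdef
      simp only [Fens]
      refine sInf_le ⟨Γ, ?_, ?_, ?_, ?_⟩
      · exact (hsmul a ha h11).add (hsmul b hb h21)
      · rw [hΓdef, Matrix.trace_add, Matrix.trace_smul, Matrix.trace_smul, h12, h22]
        simp only [smul_eq_mul, mul_one]
        rw [← Complex.ofReal_add, hab, Complex.ofReal_one]
      · intro i
        have h31 : ∀ I : FIdx M N, (Γ I I).re = a * (Γ1 I I).re + b * (Γ2 I I).re := by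
          intro I
          rw [hΓdef]
          simp only [Matrix.add_apply, Matrix.smul_apply, smul_eq_mul, Complex.add_re,
            Complex.re_ofReal_mul]
        rw [edensity]
        calc ∑ I : FIdx M N, (if i ∈ I.1 then (Γ I I).re else 0)
            = ∑ I : FIdx M N, ((if i ∈ I.1 then a * (Γ1 I I).re else 0)
              + (if i ∈ I.1 then b * (Γ2 I I).re else 0)) := by
              refine Finset.sum_congr rfl fun I _ => ?_
              by_cases h : i ∈ I.1 <;> simp [h, h31 I]
          _ = a * edensity M N Γ1 i + b * edensity M N Γ2 i := by
              rw [Finset.sum_add_distrib, edensity, edensity, Finset.mul_sum, Finset.mul_sum]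
              congr 1 <;> exact Finset.sum_congr rfl fun I _ => by
                by_cases h : i ∈ I.1 <;> simp [h]
          _ = (a • ρ + b • σ) i := by
              rw [h13, h23]
              simp [Pi.add_apply, smul_eq_mul]
      · norm_cast
        rw [hΓdef, Matrix.add_mul, Matrix.smul_mul, Matrix.smul_mul, Matrix.trace_add,
          Matrix.trace_smul, Matrix.trace_smul]
        simp [smul_eq_mul, Complex.add_re, Complex.re_ofReal_mul]
    set S := {x : EReal | ∃ Γ : Matrix (FIdx M N) (FIdx M N) ℂ, Γ.PosSemidef ∧ Γ.trace = 1 ∧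
      (∀ i, edensity M N Γ i = ρ i) ∧ x = (((Γ * H0).trace).re : ℝ)} with hSdef
    set T := {x : EReal | ∃ Γ : Matrix (FIdx M N) (FIdx M N) ℂ, Γ.PosSemidef ∧ Γ.trace = 1 ∧
      (∀ i, edensity M N Γ i = σ i) ∧ x = (((Γ * H0).trace).re : ℝ)} with hTdef
    have hFρ : Fens M N H0 ρ = sInf S := rfl
    have hFσ : Fens M N H0 σ = sInf T := rfl
    have hSlb : ∀ x ∈ S, (m0 : EReal) ≤ x := by
      rintro x ⟨Γ, h1, h2, h3, rfl⟩
      exact_mod_cast hlb Γ h1 h2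
    have hTlb : ∀ x ∈ T, (m0 : EReal) ≤ x := by
      rintro x ⟨Γ, h1, h2, h3, rfl⟩
      exact_mod_cast hlb Γ h1 h2
    by_cases hSe : S = ∅
    · have h1 : Fens M N H0 ρ = ⊤ := by rw [hFρ, hSe, sInf_empty]
      have h3 : (↑b : EReal) * Fens M N H0 σ ≠ ⊥ := by
        have hm : ((b * m0 : ℝ) : EReal) ≤ (↑b : EReal) * Fens M N H0 σ := by
          rw [EReal.coe_mul, hFσ]
          exact mul_le_mul_of_nonneg_left (le_sInf hTlb) (by exact_mod_cast hb)
        exact ((EReal.bot_lt_coe _).trans_le hm).ne'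
      rw [h1, EReal.coe_mul_top_of_pos ha0, EReal.top_add_of_ne_bot h3]
      exact le_top
    by_cases hTe : T = ∅
    · have h1 : Fens M N H0 σ = ⊤ := by rw [hFσ, hTe, sInf_empty]
      have h3 : (↑a : EReal) * Fens M N H0 ρ ≠ ⊥ := by
        have hm : ((a * m0 : ℝ) : EReal) ≤ (↑a : EReal) * Fens M N H0 ρ := by
          rw [EReal.coe_mul, hFρ]
          exact mul_le_mul_of_nonneg_left (le_sInf hSlb) (by exact_mod_cast ha)
        exact ((EReal.bot_lt_coe _).trans_le hm).ne'
      rw [h1, EReal.coe_mul_top_of_pos hb0, EReal.add_top_of_ne_bot h3]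
      exact le_top
    have hSne : S.Nonempty := Set.nonempty_iff_ne_empty.2 hSe
    have hTne : T.Nonempty := Set.nonempty_iff_ne_empty.2 hTe
    have hsbot : sInf S ≠ ⊥ := ((EReal.bot_lt_coe m0).trans_le (le_sInf hSlb)).ne'
    have htbot : sInf T ≠ ⊥ := ((EReal.bot_lt_coe m0).trans_le (le_sInf hTlb)).ne'
    have hstop : sInf S ≠ ⊤ := by
      obtain ⟨x, hx⟩ := hSne
      have hle := sInf_le hx
      obtain ⟨Γ1, _, _, _, rfl⟩ := hx
      exact (hle.trans_lt (EReal.coe_lt_top _)).ne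
    have httop : sInf T ≠ ⊤ := by
      obtain ⟨y, hy⟩ := hTne
      have hle := sInf_le hy
      obtain ⟨Γ2, _, _, _, rfl⟩ := hy
      exact (hle.trans_lt (EReal.coe_lt_top _)).ne
    set s := (sInf S).toReal with hsdef
    set t := (sInf T).toReal with htdef
    have hsS : sInf S = (s : EReal) := (EReal.coe_toReal hstop hsbot).symm
    have htT : sInf T = (t : EReal) := (EReal.coe_toReal httop htbot).symm
    rw [hFρ, hFσ, hsS, htT, ← EReal.coe_mul, ← EReal.coe_mul, ← EReal.coe_add]
    refine ereal_le_coe_of_forall_eps fun ε hε => ?_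
    have h5 : sInf S < ((s + ε : ℝ) : EReal) := by
      rw [hsS]; exact_mod_cast (by linarith : s < s + ε)
    have h6 : sInf T < ((t + ε : ℝ) : EReal) := by
      rw [htT]; exact_mod_cast (by linarith : t < t + ε)
    obtain ⟨x, hxS, hxlt⟩ := sInf_lt_iff.mp h5
    obtain ⟨y, hyT, hylt⟩ := sInf_lt_iff.mp h6
    obtain ⟨Γ1, h11, h12, h13, rfl⟩ := hxS
    obtain ⟨Γ2, h21, h22, h23, rfl⟩ := hyT
    rw [EReal.coe_lt_coe_iff] at hxlt hylt
    refine le_trans (hcomb Γ1 Γ2 h11 h12 h13 h21 h22 h23) ?_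
    rw [EReal.coe_le_coe_iff]
    have hx1 : a * ((Γ1 * H0).trace).re ≤ a * (s + ε) :=
      mul_le_mul_of_nonneg_left hxlt.le ha
    have hy1 : b * ((Γ2 * H0).trace).re ≤ b * (t + ε) :=
      mul_le_mul_of_nonneg_left hylt.le hb
    have hε1 : a * ε + b * ε = ε := by rw [← add_mul, hab, one_mul]
    nlinarith [hx1, hy1, hε1]
  · -- Fens ≤ Ftilde
    intro ρ
    simp only [Fens, Ftilde]
    apply sInf_le_sInf
    rintro x ⟨Ψ, h1, h2, rfl⟩
    obtain ⟨Γ, hg1, hg2, hg3, hg4⟩ := pure_to_mixed H0 Ψ h1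
    exact ⟨Γ, hg1, hg2, fun i => by rw [hg3 i, h2 i], by rw [hg4]⟩
  · -- largest convex function below Ftilde
    intro G hG hGF ρ
    simp only [Fens]
    refine le_sInf ?_
    rintro x ⟨Γ, h1, h2, h3, rfl⟩
    obtain ⟨w, Ψ, hw0, hw1, hnorm, hdens, hval⟩ := spectral_decomp H0 h1 h2
    have hρ : ρ = ∑ k : FIdx M N, w k • density M N (Ψ k) := by
      funext i
      rw [← h3 i, hdens i]
      simp [Finset.sum_apply, Pi.smul_apply, smul_eq_mul]
    have hGk : ∀ k ∈ (Finset.univ : Finset (FIdx M N)),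
        G (density M N (Ψ k)) ≤ ((quadForm M N H0 (Ψ k) : ℝ) : EReal) := by
      intro k _
      refine le_trans (hGF (density M N (Ψ k))) ?_
      simp only [Ftilde]
      exact sInf_le ⟨Ψ k, hnorm k, fun i => rfl, rfl⟩
    have hmain := convexFn_sum hG Finset.univ (fun k => density M N (Ψ k))
      (fun k => quadForm M N H0 (Ψ k)) w (fun k _ => hw0 k) hw1 hGk
    rw [← hρ] at hmain
    rw [hval]
    exact_mod_cast hmain
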